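/- Every Hermitian matrix H indexed by (Fin m × Fin n) over ℂ lies in the real linear span of the set of Kronecker products of rank-one projectors, {(aa†)⊗(bb†) : a ∈ ℂ^m, b ∈ ℂ^n, ‖a‖ = ‖b‖ = 1}. Consequently, every bipartite density matrix can be written as a real (possibly signed) linear combination of pure product states, i.e., the residual component vanishes for the classical family of product states. -/

import Mathlib

open scoped ComplexConjugate Kronecker

open Matrix

namespace ProdProjAux

/-- rank-one projector-like matrix -/
noncomputable def proj {m : ℕ} (a : Fin m → ℂ) : Matrix (Fin m) (Fin m) ℂ :=
  Matrix.of fun i j => a i * conj (a j)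

def projSet (m : ℕ) : Set (Matrix (Fin m) (Fin m) ℂ) :=
  {M | ∃ a : Fin m → ℂ, (∑ i, ‖a i‖ ^ 2 = 1) ∧ M = proj a}

lemma sum_two {m : ℕ} {M : Type*} [AddCommMonoid M] {i j : Fin m} (hij : i ≠ j) (x y : M) :
    (∑ k, (if k = i then x else if k = j then y else 0)) = x + y := by
  have h : ∀ k, (if k = i then x else if k = j then y else 0) =
      (if k = i then x else 0) + (if k = j then y else 0) := by
    intro k
    by_cases h1 : k = i <;> by_cases h2 : k = j <;> simp_all
  simp [h, Finset.sum_add_distrib]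

noncomputable def c : ℂ := ((Real.sqrt 2)⁻¹ : ℝ)

lemma hreal : ((Real.sqrt 2)⁻¹ * (Real.sqrt 2)⁻¹ : ℝ) = 1 / 2 := by
  rw [← mul_inv, Real.mul_self_sqrt (by norm_num : (0:ℝ) ≤ 2)]
  norm_num

lemma hc : c * c = 1 / 2 := by
  unfold c
  rw [← Complex.ofReal_mul, hreal]
  norm_num

lemma habs : ‖c‖ ^ 2 = 1 / 2 := by
  have := hc
  have h2 : ‖c‖ ^ 2 = Complex.normSq c := by
    rw [Complex.sq_norm]
  rw [h2]
  unfold c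
  rw [Complex.normSq_ofReal, hreal]

lemma conj_c : conj c = c := by
  unfold c; exact Complex.conj_ofReal _

lemma std_mem_span {m : ℕ} (i j : Fin m) :
    Matrix.single i j (1 : ℂ) ∈ Submodule.span ℂ (projSet m) := by
  by_cases hij : i = j
  · subst hij
    apply Submodule.subset_span
    refine ⟨fun k => if k = i then 1 else 0, ?_, ?_⟩
    · have h : ∀ x : Fin m, ‖if x = i then (1:ℂ) else 0‖ ^ 2
          = if x = i then (1:ℝ) else 0 := by
        intro x; split_ifs <;> simp
      rw [Fintype.sum_congr _ _ h]
      simp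
    · ext k l
      simp only [proj, Matrix.single, Matrix.of_apply]
      by_cases h1 : k = i <;> by_cases h2 : l = i <;>
        simp_all [eq_comm]
  · -- i ≠ j
    set u : Fin m → ℂ := fun k => if k = i then c else if k = j then c else 0 with hu
    set v : Fin m → ℂ := fun k => if k = i then c else if k = j then c * Complex.I else 0 with hv
    set e : Fin m → Fin m → ℂ := fun p k => if k = p then 1 else 0 with he
    have hji : ¬ j = i := fun h => hij h.symm
    have hc2 : c ^ 2 = (1/2 : ℂ) := by rw [sq]; exact hc
    have hE : Matrix.single i j (1 : ℂ) =
        proj u + Complex.I • proj v - ((1 + Complex.I)/2) • (proj (e i) + proj (e j)) := by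
      ext k l
      simp only [proj, Matrix.sub_apply, Matrix.add_apply, Matrix.smul_apply, Matrix.of_apply,
        Matrix.single, hu, hv, he, smul_eq_mul]
      by_cases h1 : k = i <;> by_cases h2 : k = j <;> by_cases h3 : l = i <;> by_cases h4 : l = j <;>
        simp_all [Complex.conj_I, _root_.map_mul, conj_c] <;>
        (try ring_nf) <;>
        (try simp_all [hc2, Complex.I_sq]) <;>
        (try ring_nf)
      all_goals first
        | (intro h; simp_all)
        | (rw [show Complex.I ^ 3 = Complex.I ^ 2 * Complex.I from by ring, Complex.I_sq]; ring)
    rw [hE]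
    have hmemu : proj u ∈ projSet m := by
      refine ⟨u, ?_, rfl⟩
      have : ∀ k, ‖u k‖ ^ 2 =
          if k = i then (1:ℝ)/2 else if k = j then (1:ℝ)/2 else 0 := by
        intro k
        simp only [hu]
        by_cases h1 : k = i <;> by_cases h2 : k = j <;> simp_all [habs]
      rw [Fintype.sum_congr _ _ this, sum_two hij]
      norm_num
    have hmemv : proj v ∈ projSet m := by
      refine ⟨v, ?_, rfl⟩
      have : ∀ k, ‖v k‖ ^ 2 =
          if k = i then (1:ℝ)/2 else if k = j then (1:ℝ)/2 else 0 := by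
        intro k
        simp only [hv]
        by_cases h1 : k = i <;> by_cases h2 : k = j <;>
          simp_all [habs, _root_.map_mul, Complex.norm_I, mul_pow]
      rw [Fintype.sum_congr _ _ this, sum_two hij]
      norm_num
    have hmeme : ∀ p : Fin m, proj (e p) ∈ projSet m := by
      intro p
      refine ⟨e p, ?_, rfl⟩
      have h : ∀ x : Fin m, ‖e p x‖ ^ 2 = if x = p then (1:ℝ) else 0 := by
        intro x; simp only [he]; split_ifs <;> simp
      rw [Fintype.sum_congr _ _ h]
      simp
    exact Submodule.sub_mem _
      (Submodule.add_mem _ (Submodule.subset_span hmemu)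
        (Submodule.smul_mem _ _ (Submodule.subset_span hmemv)))
      (Submodule.smul_mem _ _ (Submodule.add_mem _
        (Submodule.subset_span (hmeme i)) (Submodule.subset_span (hmeme j))))

end ProdProjAux

set_option maxHeartbeats 1600000 in
/-- Every Hermitian matrix on a bipartite system lies in the real linear span
of the Kronecker products of rank-one projectors onto unit vectors; hence the
residual component vanishes for the classical family of product states. -/
theorem hermitian_mem_span_productProjectors
    {m n : ℕ} (H : Matrix (Fin m × Fin n) (Fin m × Fin n) ℂ)
    (hH : H.IsHermitian) :
    H ∈ Submodule.span ℝ {M : Matrix (Fin m × Fin n) (Fin m × Fin n) ℂ |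
      ∃ (a : Fin m → ℂ) (b : Fin n → ℂ),
        (∑ i, ‖a i‖ ^ 2 = 1) ∧
        (∑ k, ‖b k‖ ^ 2 = 1) ∧
        M = (Matrix.of fun i j => a i * conj (a j)) ⊗ₖ
            (Matrix.of fun k l => b k * conj (b l))} := by
  classical
  open ProdProjAux in
  set T : Set (Matrix (Fin m × Fin n) (Fin m × Fin n) ℂ) :=
    {M | ∃ (a : Fin m → ℂ) (b : Fin n → ℂ),
        (∑ i, ‖a i‖ ^ 2 = 1) ∧
        (∑ k, ‖b k‖ ^ 2 = 1) ∧
        M = (Matrix.of fun i j => a i * conj (a j)) ⊗ₖ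
            (Matrix.of fun k l => b k * conj (b l))} with hT
  -- Step 1: T consists of Hermitian matrices
  have hTherm : ∀ M ∈ T, M.IsHermitian := by
    rintro M ⟨a, b, _, _, rfl⟩
    ext ⟨i, k⟩ ⟨j, l⟩
    simp [Matrix.conjTranspose_apply, Matrix.kroneckerMap_apply, _root_.map_mul]
    ring
  -- Step 2: kron of span elements is in span T
  have hkron : ∀ (A : Matrix (Fin m) (Fin m) ℂ) (B : Matrix (Fin n) (Fin n) ℂ),
      A ∈ Submodule.span ℂ (projSet m) → B ∈ Submodule.span ℂ (projSet n) →
      A ⊗ₖ B ∈ Submodule.span ℂ T := by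
    intro A B hA hB
    induction hA using Submodule.span_induction with
    | mem A hAmem =>
      induction hB using Submodule.span_induction with
      | mem B hBmem =>
        apply Submodule.subset_span
        obtain ⟨a, ha, rfl⟩ := hAmem
        obtain ⟨b, hb, rfl⟩ := hBmem
        exact ⟨a, b, ha, hb, rfl⟩
      | zero => rw [Matrix.kronecker_zero]; exact Submodule.zero_mem _
      | add B₁ B₂ _ _ h1 h2 => rw [Matrix.kronecker_add]; exact Submodule.add_mem _ h1 h2
      | smul r B _ h => rw [Matrix.kronecker_smul]; exact Submodule.smul_mem _ _ h
    | zero => rw [Matrix.zero_kronecker]; exact Submodule.zero_mem _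
    | add A₁ A₂ _ _ h1 h2 => rw [Matrix.add_kronecker]; exact Submodule.add_mem _ h1 h2
    | smul r A _ h => rw [Matrix.smul_kronecker]; exact Submodule.smul_mem _ _ h
  -- Step 3: complex span of T is everything
  have htop : ∀ X : Matrix (Fin m × Fin n) (Fin m × Fin n) ℂ,
      X ∈ Submodule.span ℂ T := by
    intro X
    rw [Matrix.matrix_eq_sum_single X]
    refine Submodule.sum_mem _ fun p _ => Submodule.sum_mem _ fun q _ => ?_
    obtain ⟨i, k⟩ := p
    obtain ⟨j, l⟩ := q
    have hstd : Matrix.single (i, k) (j, l) (X (i,k) (j,l)) =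
        X (i,k) (j,l) •
          ((Matrix.single i j (1:ℂ)) ⊗ₖ (Matrix.single k l (1:ℂ))) := by
      ext ⟨i', k'⟩ ⟨j', l'⟩
      simp only [Matrix.single, Matrix.smul_apply, Matrix.kroneckerMap_apply,
        Matrix.of_apply, smul_eq_mul, Prod.mk.injEq]
      by_cases h1 : i' = i <;> by_cases h2 : k' = k <;> by_cases h3 : j' = j <;>
        by_cases h4 : l' = l <;> simp_all [ite_and, and_assoc] <;>
        (try (split_ifs <;> simp_all))
    rw [hstd]
    exact Submodule.smul_mem _ _ (hkron _ _ (std_mem_span i j) (std_mem_span k l))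
  -- Step 4: descend from ℂ-span to ℝ-span using Hermiticity
  obtain ⟨N, f, g, hsum⟩ := Submodule.mem_span_set'.mp (htop H)
  have hgherm : ∀ t : Fin N, (g t : Matrix (Fin m × Fin n) (Fin m × Fin n) ℂ).IsHermitian :=
    fun t => hTherm _ (g t).2
  have hconj : H = ∑ t, (conj (f t)) • (g t : Matrix (Fin m × Fin n) (Fin m × Fin n) ℂ) := by
    have := congrArg Matrix.conjTranspose hsum
    rw [hH] at this
    rw [← this, Matrix.conjTranspose_sum]
    refine Finset.sum_congr rfl fun t _ => ?_
    rw [Matrix.conjTranspose_smul, (hgherm t)]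
    rfl
  have hsmul : ∀ (r : ℝ) (x : Matrix (Fin m × Fin n) (Fin m × Fin n) ℂ),
      (r : ℂ) • x = r • x := fun r x => by
    rw [← Complex.coe_algebraMap, algebraMap_smul]
  have hre : H = ∑ t, ((f t).re : ℝ) • (g t : Matrix (Fin m × Fin n) (Fin m × Fin n) ℂ) := by
    have h2 : (2 : ℝ) • H = ∑ t, ((2 * (f t).re : ℝ)) • (g t : Matrix (Fin m × Fin n) (Fin m × Fin n) ℂ) := by
      rw [two_smul]
      nth_rewrite 1 [← hsum]
      rw [hconj]
      rw [← Finset.sum_add_distrib]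
      refine Finset.sum_congr rfl fun t _ => ?_
      rw [← add_smul, Complex.add_conj]
      exact hsmul _ _
    have h4 : H = (1/2 : ℝ) • ((2 : ℝ) • H) := by
      rw [smul_smul]; norm_num
    rw [h4, h2, Finset.smul_sum]
    refine Finset.sum_congr rfl fun t _ => ?_
    rw [smul_smul]
    congr 1
    ring
  rw [hre]
  exact Submodule.sum_mem _ fun t _ =>
    Submodule.smul_mem _ _ (Submodule.subset_span (g t).2)
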